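/- (Rademacher complexity of a max over classes) Let F₁,…,F_m be classes of functions f : X → ℝ and M = { x ↦ max(f₁(x),…,f_m(x)) : f_i ∈ F_i }. Then the Rademacher complexity satisfies R_n(M) ≤ Σ_{i=1}^m R_n(F_i). -/

import Mathlib

open MeasureTheory

open Set Function

namespace RadMax

variable {n : ℕ}

def sg (b : Bool) : ℝ := if b then 1 else -1

lemma sg_not (b : Bool) : sg (!b) = - sg b := by cases b <;> simp [sg]

lemma abs_sg (b : Bool) : |sg b| = 1 := by cases b <;> simp [sg]

lemma sg_mul_le_abs (b : Bool) (x : ℝ) : sg b * x ≤ |x| := by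
  cases b
  · simpa [sg] using neg_le_abs x
  · simpa [sg] using le_abs_self x

/-- Signed empirical sum functional (unnormalized Rademacher sum). -/
noncomputable def Erad (n : ℕ) {T : Type*} (f : T → Fin n → ℝ) : ℝ :=
  ∑ ε : Fin n → Bool, ⨆ t, ∑ j, sg (ε j) * f t j

lemma bdd_of_abs_le {T : Type*} (f : T → Fin n → ℝ) (C : ℝ)
    (hC : ∀ t, ∑ j, |f t j| ≤ C) (ε : Fin n → Bool) :
    BddAbove (range fun t => ∑ j, sg (ε j) * f t j) := by
  refine ⟨C, ?_⟩
  rintro _ ⟨t, rfl⟩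
  calc ∑ j, sg (ε j) * f t j ≤ ∑ j, |f t j| :=
        Finset.sum_le_sum fun j _ => sg_mul_le_abs _ _
    _ ≤ C := hC t

lemma exists_abs_bound {T : Type*} [Nonempty T] (f : T → Fin n → ℝ)
    (hb : ∀ ε : Fin n → Bool, BddAbove (range fun t => ∑ j, sg (ε j) * f t j)) :
    ∃ C, ∀ t, ∑ j, |f t j| ≤ C := by
  have h' : ∀ ε : Fin n → Bool, ∃ B, ∀ t, ∑ j, sg (ε j) * f t j ≤ B := by
    intro ε
    obtain ⟨B, hB⟩ := hb ε
    exact ⟨B, fun t => hB ⟨t, rfl⟩⟩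
  choose B hB using h'
  refine ⟨∑ ε : Fin n → Bool, max 0 (B ε), fun t => ?_⟩
  have key : ∑ j, |f t j| = ∑ j, sg (decide (0 ≤ f t j)) * f t j := by
    refine Finset.sum_congr rfl fun j _ => ?_
    by_cases h : 0 ≤ f t j
    · simp [sg, h, abs_of_nonneg h]
    · simp [sg, h, abs_of_neg (lt_of_not_ge h)]
  rw [key]
  calc ∑ j, sg (decide (0 ≤ f t j)) * f t j ≤ B (fun j => decide (0 ≤ f t j)) :=
        hB _ t
    _ ≤ max 0 (B (fun j => decide (0 ≤ f t j))) := le_max_right _ _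
    _ ≤ ∑ ε : Fin n → Bool, max 0 (B ε) :=
        Finset.single_le_sum (f := fun ε => max 0 (B ε)) (fun ε _ => le_max_left _ _)
          (Finset.mem_univ _)

lemma ciSup_add_le' {T : Type*} [Nonempty T] {f g : T → ℝ}
    (hf : BddAbove (range f)) (hg : BddAbove (range g)) :
    ⨆ t, (f t + g t) ≤ (⨆ t, f t) + ⨆ t, g t :=
  ciSup_le fun t => add_le_add (le_ciSup hf t) (le_ciSup hg t)

lemma ciSup_add_ciSup_le {T : Type*} [Nonempty T] {f g : T → ℝ} {C : ℝ}
    (h : ∀ t t', f t + g t' ≤ C) : (⨆ t, f t) + (⨆ t, g t) ≤ C := by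
  have h1 : ∀ t, (⨆ t', g t') ≤ C - f t := fun t => ciSup_le fun t' => by linarith [h t t']
  have h2 : (⨆ t, f t) ≤ C - ⨆ t', g t' := ciSup_le fun t => by linarith [h1 t]
  linarith

lemma step {T : Type*} [Nonempty T] (A F G : T → ℝ)
    (h3 : BddAbove (range fun t => A t + G t)) (h4 : BddAbove (range fun t => A t - G t))
    (hc : ∀ t t', F t - F t' ≤ |G t - G t'|) :
    (⨆ t, (A t + F t)) + (⨆ t, (A t - F t))
      ≤ (⨆ t, (A t + G t)) + (⨆ t, (A t - G t)) := by
  apply ciSup_add_ciSup_le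
  intro t t'
  rcases le_total (G t') (G t) with h | h
  · have hle : F t - F t' ≤ G t - G t' := (hc t t').trans_eq (abs_of_nonneg (by linarith))
    calc A t + F t + (A t' - F t') ≤ (A t + G t) + (A t' - G t') := by linarith
      _ ≤ _ := add_le_add (le_ciSup h3 t) (le_ciSup h4 t')
  · have hle : F t - F t' ≤ G t' - G t := by
      have := (hc t t').trans_eq (abs_of_nonpos (by linarith)); linarith
    calc A t + F t + (A t' - F t') ≤ (A t - G t) + (A t' + G t') := by linarith
      _ ≤ (⨆ t, (A t - G t)) + (⨆ t, (A t + G t)) :=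
          add_le_add (le_ciSup h4 t) (le_ciSup h3 t')
      _ = _ := add_comm _ _

end RadMax

namespace RadMax

variable {n : ℕ}

lemma swap {T : Type*} [Nonempty T] (F G : T → Fin n → ℝ) (j₀ : Fin n)
    (heq : ∀ t j, j ≠ j₀ → F t j = G t j)
    (hc : ∀ t t', F t j₀ - F t' j₀ ≤ |G t j₀ - G t' j₀|)
    (hbG : ∀ ε : Fin n → Bool, BddAbove (range fun t => ∑ j, sg (ε j) * G t j)) :
    Erad n F ≤ Erad n G := by
  classical
  set flip : (Fin n → Bool) → (Fin n → Bool) := fun ε => Function.update ε j₀ (!ε j₀) with hflip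
  have hinv : Function.Involutive flip := by
    intro ε
    funext j
    rcases eq_or_ne j j₀ with rfl | hj
    · simp [flip]
    · simp [flip, Function.update_of_ne hj]
  have hsum : ∀ (X : (Fin n → Bool) → ℝ),
      ∑ ε : Fin n → Bool, X (flip ε) = ∑ ε : Fin n → Bool, X ε :=
    fun X => Fintype.sum_equiv (hinv.toPerm flip) _ _ (fun ε => rfl)
  -- the "rest" sum
  set A : (Fin n → Bool) → T → ℝ :=
    fun ε t => ∑ j ∈ Finset.univ.erase j₀, sg (ε j) * G t j with hA
  have hAflip : ∀ ε t, A (flip ε) t = A ε t := by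
    intro ε t
    refine Finset.sum_congr rfl fun j hj => ?_
    have : j ≠ j₀ := Finset.ne_of_mem_erase hj
    simp [flip, Function.update_of_ne this]
  have hdecF : ∀ (ε : Fin n → Bool) (t : T),
      ∑ j, sg (ε j) * F t j = A ε t + sg (ε j₀) * F t j₀ := by
    intro ε t
    rw [← Finset.sum_erase_add _ _ (Finset.mem_univ j₀)]
    congr 1
    exact Finset.sum_congr rfl fun j hj => by
      rw [heq t j (Finset.ne_of_mem_erase hj)]
  have hdecG : ∀ (ε : Fin n → Bool) (t : T),
      ∑ j, sg (ε j) * G t j = A ε t + sg (ε j₀) * G t j₀ := by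
    intro ε t
    rw [← Finset.sum_erase_add _ _ (Finset.mem_univ j₀)]
  have hflipval : ∀ (ε : Fin n → Bool), sg (flip ε j₀) = - sg (ε j₀) := by
    intro ε
    have : flip ε j₀ = !ε j₀ := by simp [flip]
    rw [this, sg_not]
  have key : ∀ ε : Fin n → Bool,
      (⨆ t, ∑ j, sg (ε j) * F t j) + (⨆ t, ∑ j, sg (flip ε j) * F t j)
      ≤ (⨆ t, ∑ j, sg (ε j) * G t j) + (⨆ t, ∑ j, sg (flip ε j) * G t j) := by
    intro ε
    have e1 : (⨆ t, ∑ j, sg (ε j) * F t j) = ⨆ t, (A ε t + sg (ε j₀) * F t j₀) :=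
      iSup_congr fun t => hdecF ε t
    have e2 : (⨆ t, ∑ j, sg (flip ε j) * F t j)
        = ⨆ t, (A ε t - sg (ε j₀) * F t j₀) := by
      refine iSup_congr fun t => ?_
      rw [hdecF (flip ε) t, hAflip, hflipval]; ring
    have e3 : (⨆ t, ∑ j, sg (ε j) * G t j) = ⨆ t, (A ε t + sg (ε j₀) * G t j₀) :=
      iSup_congr fun t => hdecG ε t
    have e4 : (⨆ t, ∑ j, sg (flip ε j) * G t j)
        = ⨆ t, (A ε t - sg (ε j₀) * G t j₀) := by
      refine iSup_congr fun t => ?_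
      rw [hdecG (flip ε) t, hAflip, hflipval]; ring
    rw [e1, e2, e3, e4]
    refine step (A ε) _ _ ?_ ?_ ?_
    · have : (fun t => A ε t + sg (ε j₀) * G t j₀) = fun t => ∑ j, sg (ε j) * G t j :=
        funext fun t => (hdecG ε t).symm
      rw [this]; exact hbG ε
    · have : (fun t => A ε t - sg (ε j₀) * G t j₀) = fun t => ∑ j, sg (flip ε j) * G t j := by
        funext t
        rw [hdecG (flip ε) t, hAflip, hflipval]; ring
      rw [this]; exact hbG (flip ε)
    · intro t t'
      have h1 := hc t t'
      have h2 := hc t' t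
      have habs : |F t j₀ - F t' j₀| ≤ |G t j₀ - G t' j₀| := by
        rw [abs_sub_comm] at h2
        exact abs_sub_le_iff.2 ⟨h1, h2⟩
      calc sg (ε j₀) * F t j₀ - sg (ε j₀) * F t' j₀
          = sg (ε j₀) * (F t j₀ - F t' j₀) := by ring
        _ ≤ |F t j₀ - F t' j₀| := sg_mul_le_abs _ _
        _ ≤ |G t j₀ - G t' j₀| := habs
        _ = |sg (ε j₀)| * |G t j₀ - G t' j₀| := by rw [abs_sg (ε j₀), one_mul]
        _ = |sg (ε j₀) * (G t j₀ - G t' j₀)| := (abs_mul _ _).symm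
        _ = |sg (ε j₀) * G t j₀ - sg (ε j₀) * G t' j₀| := congrArg abs (by ring)
  have h2 : Erad n F + Erad n F ≤ Erad n G + Erad n G := by
    unfold Erad
    calc (∑ ε : Fin n → Bool, ⨆ t, ∑ j, sg (ε j) * F t j)
          + ∑ ε : Fin n → Bool, ⨆ t, ∑ j, sg (ε j) * F t j
        = ∑ ε : Fin n → Bool, ((⨆ t, ∑ j, sg (ε j) * F t j)
            + ⨆ t, ∑ j, sg (flip ε j) * F t j) := by
          rw [Finset.sum_add_distrib, hsum (fun ε => ⨆ t, ∑ j, sg (ε j) * F t j)]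
      _ ≤ ∑ ε : Fin n → Bool, ((⨆ t, ∑ j, sg (ε j) * G t j)
            + ⨆ t, ∑ j, sg (flip ε j) * G t j) := Finset.sum_le_sum fun ε _ => key ε
      _ = _ := by
          rw [Finset.sum_add_distrib, hsum (fun ε => ⨆ t, ∑ j, sg (ε j) * G t j)]
  linarith

end RadMax

namespace RadMax
variable {n : ℕ}

lemma contraction {T : Type*} [Nonempty T] (h : T → Fin n → ℝ)
    (hb : ∀ ε : Fin n → Bool, BddAbove (range fun t => ∑ j, sg (ε j) * h t j)) :
    Erad n (fun t j => |h t j|) ≤ Erad n h := by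
  classical
  obtain ⟨C, hC⟩ := exists_abs_bound h hb
  suffices H : ∀ S : Finset (Fin n),
      Erad n (fun t j => if j ∈ S then |h t j| else h t j) ≤ Erad n h by
    have := H Finset.univ
    simpa using this
  intro S
  induction S using Finset.induction_on with
  | empty => simp [Erad]
  | insert j₀ S hj₀ ih =>
    refine le_trans ?_ ih
    apply swap _ _ j₀
    · intro t j hj
      have : (j ∈ insert j₀ S) ↔ (j ∈ S) := by
        simp [Finset.mem_insert, hj]
      by_cases hjS : j ∈ S
      · simp [Finset.mem_insert, hjS]
      · simp [Finset.mem_insert, hj, hjS]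
    · intro t t'
      simp only [Finset.mem_insert, true_or, if_pos, hj₀, if_neg]
      exact abs_sub_abs_le_abs_sub _ _
    · intro ε
      refine bdd_of_abs_le _ C (fun t => ?_) ε
      refine le_trans (le_of_eq ?_) (hC t)
      refine Finset.sum_congr rfl fun j _ => ?_
      by_cases hjS : j ∈ S <;> simp [hjS]

lemma Erad_congr {T : Type*} {f g : T → Fin n → ℝ} (h : ∀ t j, f t j = g t j) :
    Erad n f = Erad n g := by
  have : f = g := funext fun t => funext fun j => h t j
  rw [this]

lemma Erad_neg {T : Type*} (f : T → Fin n → ℝ) :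
    Erad n (fun t j => -(f t j)) = Erad n f := by
  unfold Erad
  refine Fintype.sum_equiv (Equiv.arrowCongr (Equiv.refl (Fin n)) ⟨Bool.not, Bool.not, Bool.not_not, Bool.not_not⟩) _ _ fun ε => ?_
  refine iSup_congr fun t => Finset.sum_congr rfl fun j _ => ?_
  show sg (ε j) * -(f t j) = sg (!(ε j)) * f t j
  rw [sg_not]; ring

lemma Erad_smul {T : Type*} (f : T → Fin n → ℝ) {c : ℝ} (hc : 0 ≤ c) :
    Erad n (fun t j => c * f t j) = c * Erad n f := by
  unfold Erad
  rw [Finset.mul_sum]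
  refine Finset.sum_congr rfl fun ε _ => ?_
  rw [Real.mul_iSup_of_nonneg hc]
  refine iSup_congr fun t => ?_
  rw [Finset.mul_sum]
  exact Finset.sum_congr rfl fun j _ => by ring

lemma Erad_add_le {T : Type*} [Nonempty T] (f g : T → Fin n → ℝ)
    (hf : ∀ ε : Fin n → Bool, BddAbove (range fun t => ∑ j, sg (ε j) * f t j))
    (hg : ∀ ε : Fin n → Bool, BddAbove (range fun t => ∑ j, sg (ε j) * g t j)) :
    Erad n (fun t j => f t j + g t j) ≤ Erad n f + Erad n g := by
  unfold Erad
  rw [← Finset.sum_add_distrib]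
  refine Finset.sum_le_sum fun ε _ => ?_
  have e : (⨆ t, ∑ j, sg (ε j) * (f t j + g t j))
      = ⨆ t, ((∑ j, sg (ε j) * f t j) + ∑ j, sg (ε j) * g t j) := by
    refine iSup_congr fun t => ?_
    rw [← Finset.sum_add_distrib]
    exact Finset.sum_congr rfl fun j _ => by ring
  rw [e]
  exact ciSup_add_le' (hf ε) (hg ε)

lemma ciSup_comp_surj {α β : Type*} [Nonempty α] (f : β → ℝ) {e : α → β}
    (he : Surjective e) : ⨆ a, f (e a) = ⨆ b, f b :=
  congrArg sSup (he.range_comp f)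

lemma Erad_comp_surj {T T' : Type*} [Nonempty T'] (f : T → Fin n → ℝ) (e : T' → T)
    (he : Surjective e) : Erad n (fun t' j => f (e t') j) = Erad n f :=
  Finset.sum_congr rfl fun ε _ =>
    ciSup_comp_surj (fun t => ∑ j, sg (ε j) * f t j) he

end RadMax

namespace RadMax
variable {n : ℕ}

lemma abs_sub_le' (x y : ℝ) : |x - y| ≤ |x| + |y| := by
  calc |x - y| = |x + -y| := by rw [sub_eq_add_neg]
    _ ≤ |x| + |-y| := abs_add_le _ _
    _ = |x| + |y| := by rw [abs_neg]

lemma two_class {α β : Type*} [Nonempty α] [Nonempty β]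
    (u : α → Fin n → ℝ) (v : β → Fin n → ℝ)
    (hbu : ∀ ε : Fin n → Bool, BddAbove (range fun a => ∑ j, sg (ε j) * u a j))
    (hbv : ∀ ε : Fin n → Bool, BddAbove (range fun b => ∑ j, sg (ε j) * v b j)) :
    Erad n (fun p : α × β => fun j => max (u p.1 j) (v p.2 j))
      ≤ Erad n u + Erad n v := by
  obtain ⟨Cu, hCu⟩ := exists_abs_bound u hbu
  obtain ⟨Cv, hCv⟩ := exists_abs_bound v hbv
  set D : α × β → Fin n → ℝ := fun p j => (u p.1 j - v p.2 j) / 2 with hD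
  set Pf : α × β → Fin n → ℝ := fun p j => (u p.1 j + v p.2 j) / 2 with hPf
  have hmax : ∀ (p : α × β) (j : Fin n),
      max (u p.1 j) (v p.2 j) = Pf p j + |D p j| := by
    intro p j
    simp only [hPf, hD]
    rcases le_total (u p.1 j) (v p.2 j) with h | h
    · rw [max_eq_right h, abs_of_nonpos (by linarith)]; ring
    · rw [max_eq_left h, abs_of_nonneg (by linarith)]; ring
  -- abs bounds
  have hsum2 : ∀ p : α × β, ∑ j, (|u p.1 j| + |v p.2 j|) / 2 ≤ (Cu + Cv) / 2 := by
    intro p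
    rw [← Finset.sum_div, Finset.sum_add_distrib]
    have h1 := hCu p.1; have h2 := hCv p.2
    linarith
  have habsD : ∀ p : α × β, ∑ j, |D p j| ≤ (Cu + Cv) / 2 := by
    intro p
    refine le_trans (Finset.sum_le_sum fun j _ => ?_) (hsum2 p)
    simp only [hD]
    rw [abs_div, abs_two]
    gcongr
    exact abs_sub_le' _ _
  have habsP : ∀ p : α × β, ∑ j, |Pf p j| ≤ (Cu + Cv) / 2 := by
    intro p
    refine le_trans (Finset.sum_le_sum fun j _ => ?_) (hsum2 p)
    simp only [hPf]
    rw [abs_div, abs_two]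
    gcongr
    exact abs_add_le _ _
  have hbD : ∀ ε : Fin n → Bool,
      BddAbove (range fun p : α × β => ∑ j, sg (ε j) * D p j) :=
    bdd_of_abs_le D _ habsD
  have hbP : ∀ ε : Fin n → Bool,
      BddAbove (range fun p : α × β => ∑ j, sg (ε j) * Pf p j) :=
    bdd_of_abs_le Pf _ habsP
  have hbAbsD : ∀ ε : Fin n → Bool,
      BddAbove (range fun p : α × β => ∑ j, sg (ε j) * |D p j|) := by
    refine bdd_of_abs_le _ ((Cu + Cv) / 2) fun p => ?_
    simpa [abs_abs] using habsD p
  -- step 1: max = Pf + |D|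
  have e1 : Erad n (fun p : α × β => fun j => max (u p.1 j) (v p.2 j))
      = Erad n (fun p j => Pf p j + |D p j|) := Erad_congr hmax
  have e2 : Erad n (fun p : α × β => fun j => Pf p j + |D p j|)
      ≤ Erad n Pf + Erad n (fun p j => |D p j|) :=
    Erad_add_le Pf (fun p j => |D p j|) hbP hbAbsD
  have e3 : Erad n (fun p : α × β => fun j => |D p j|) ≤ Erad n D :=
    contraction D hbD
  -- split Pf and D into halves
  have hbu2 : ∀ ε : Fin n → Bool,
      BddAbove (range fun p : α × β => ∑ j, sg (ε j) * (u p.1 j / 2)) := by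
    refine bdd_of_abs_le _ (Cu / 2) fun p => ?_
    have h : ∑ j, |u p.1 j / 2| = ∑ j, |u p.1 j| / 2 :=
      Finset.sum_congr rfl fun j _ => by rw [abs_div, abs_two]
    rw [h, ← Finset.sum_div]
    linarith [hCu p.1]
  have hbv2 : ∀ ε : Fin n → Bool,
      BddAbove (range fun p : α × β => ∑ j, sg (ε j) * (v p.2 j / 2)) := by
    refine bdd_of_abs_le _ (Cv / 2) fun p => ?_
    have h : ∑ j, |v p.2 j / 2| = ∑ j, |v p.2 j| / 2 :=
      Finset.sum_congr rfl fun j _ => by rw [abs_div, abs_two]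
    rw [h, ← Finset.sum_div]
    linarith [hCv p.2]
  have hbnegv2 : ∀ ε : Fin n → Bool,
      BddAbove (range fun p : α × β => ∑ j, sg (ε j) * (-(v p.2 j / 2))) := by
    refine bdd_of_abs_le _ (Cv / 2) fun p => ?_
    have h : ∑ j, |(-(v p.2 j / 2))| = ∑ j, |v p.2 j| / 2 :=
      Finset.sum_congr rfl fun j _ => by rw [abs_neg, abs_div, abs_two]
    rw [h, ← Finset.sum_div]
    linarith [hCv p.2]
  have e4 : Erad n Pf ≤ Erad n (fun p : α × β => fun j => u p.1 j / 2)
      + Erad n (fun p : α × β => fun j => v p.2 j / 2) := by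
    have : Erad n Pf = Erad n (fun p : α × β => fun j => u p.1 j / 2 + v p.2 j / 2) :=
      Erad_congr fun p j => by simp only [hPf]; ring
    rw [this]
    exact Erad_add_le _ _ hbu2 hbv2
  have e5 : Erad n D ≤ Erad n (fun p : α × β => fun j => u p.1 j / 2)
      + Erad n (fun p : α × β => fun j => v p.2 j / 2) := by
    have h1 : Erad n D
        = Erad n (fun p : α × β => fun j => u p.1 j / 2 + -(v p.2 j / 2)) :=
      Erad_congr fun p j => by simp only [hD]; ring
    have h2 : Erad n (fun p : α × β => fun j => -(v p.2 j / 2))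
        = Erad n (fun p : α × β => fun j => v p.2 j / 2) :=
      Erad_neg (fun p : α × β => fun j => v p.2 j / 2)
    calc Erad n D ≤ Erad n (fun p : α × β => fun j => u p.1 j / 2)
          + Erad n (fun p : α × β => fun j => -(v p.2 j / 2)) := by
          rw [h1]; exact Erad_add_le _ _ hbu2 hbnegv2
      _ = _ := by rw [h2]
  -- collapse product sups
  have hsu : Surjective (Prod.fst : α × β → α) := Prod.fst_surjective
  have hsv : Surjective (Prod.snd : α × β → β) := Prod.snd_surjective
  have cu : Erad n (fun p : α × β => fun j => u p.1 j / 2)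
      = Erad n (fun a : α => fun j => u a j / 2) :=
    Erad_comp_surj (fun a j => u a j / 2) Prod.fst hsu
  have cv : Erad n (fun p : α × β => fun j => v p.2 j / 2)
      = Erad n (fun b : β => fun j => v b j / 2) :=
    Erad_comp_surj (fun b j => v b j / 2) Prod.snd hsv
  -- halves
  have hu2 : Erad n (fun a : α => fun j => u a j / 2) = Erad n u / 2 := by
    have : Erad n (fun a : α => fun j => u a j / 2)
        = Erad n (fun a : α => fun j => (2 : ℝ)⁻¹ * u a j) :=
      Erad_congr fun a j => by rw [div_eq_inv_mul]
    rw [this, Erad_smul u (by norm_num : (0:ℝ) ≤ 2⁻¹)]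
    ring
  have hv2 : Erad n (fun b : β => fun j => v b j / 2) = Erad n v / 2 := by
    have : Erad n (fun b : β => fun j => v b j / 2)
        = Erad n (fun b : β => fun j => (2 : ℝ)⁻¹ * v b j) :=
      Erad_congr fun b j => by rw [div_eq_inv_mul]
    rw [this, Erad_smul v (by norm_num : (0:ℝ) ≤ 2⁻¹)]
    ring
  rw [e1]
  have := e4
  have := e5
  rw [cu, cv, hu2, hv2] at e4 e5
  linarith

end RadMax

namespace RadMax
variable {n : ℕ}

lemma ciSup_fin_succ {k : ℕ} (a : Fin (k + 2) → ℝ) :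
    (⨆ i, a i) = max (a 0) (⨆ i : Fin (k + 1), a i.succ) := by
  apply le_antisymm
  · refine ciSup_le fun i => ?_
    induction i using Fin.cases with
    | zero => exact le_max_left _ _
    | succ i =>
      exact le_trans
        (le_ciSup (f := fun i : Fin (k + 1) => a i.succ)
          (Set.Finite.bddAbove (Set.finite_range _)) i)
        (le_max_right _ _)
  · refine max_le (le_ciSup (Set.Finite.bddAbove (Set.finite_range _)) 0)
      (ciSup_le fun i => le_ciSup (Set.Finite.bddAbove (Set.finite_range _)) i.succ)

lemma abs_ciSup_le {k : ℕ} (a : Fin (k + 1) → ℝ) :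
    |⨆ i, a i| ≤ ∑ i, |a i| := by
  rw [abs_le]
  constructor
  · have h1 : -(∑ i, |a i|) ≤ -|a 0| := by
      refine neg_le_neg ?_
      exact Finset.single_le_sum (f := fun i => |a i|) (fun i _ => abs_nonneg _)
        (Finset.mem_univ 0)
    refine le_trans h1 ?_
    refine le_trans (neg_abs_le (a 0)) ?_
    exact le_ciSup (Set.Finite.bddAbove (Set.finite_range _)) 0
  · refine ciSup_le fun i => ?_
    refine le_trans (le_abs_self _) ?_
    exact Finset.single_le_sum (f := fun i => |a i|) (fun i _ => abs_nonneg _)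
      (Finset.mem_univ i)

universe u

set_option maxHeartbeats 1000000 in
lemma main_pointwise (m : ℕ) :
    ∀ (ι : Fin (m + 1) → Type u) [∀ i, Nonempty (ι i)]
      (w : ∀ i, ι i → Fin n → ℝ),
      (∀ (i : Fin (m + 1)) (ε : Fin n → Bool),
        BddAbove (range fun a : ι i => ∑ j, sg (ε j) * w i a j)) →
      Erad n (fun c : (∀ i, ι i) => fun j => ⨆ i, w i (c i) j)
        ≤ ∑ i, Erad n (w i) := by
  induction m with
  | zero =>
    intro ι _ w hb
    have h1 : Erad n (fun c : (∀ i, ι i) => fun j => ⨆ i, w i (c i) j)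
        = Erad n (fun c : (∀ i, ι i) => fun j => w 0 (c 0) j) := by
      refine Erad_congr fun c j => ?_
      have h : ∀ s : Fin 1 → ℝ, (⨆ i, s i) = s 0 := fun s => ciSup_unique
      exact h _
    have hs : Function.Surjective (fun c : (∀ i, ι i) => c 0) :=
      Function.surjective_eval (β := fun i => ι i) 0
    have h2 : Erad n (fun c : (∀ i, ι i) => fun j => w 0 (c 0) j)
        = Erad n (w 0) :=
      Erad_comp_surj (w 0) _ hs
    rw [h1, h2, Fin.sum_univ_one]
  | succ m ih =>
    intro ι _ w hb
    -- reindex along Fin.consEquiv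
    set e := Fin.consEquiv ι with he
    have he0 : ∀ p : ι 0 × (∀ i : Fin (m + 1), ι i.succ), e p 0 = p.1 :=
      fun p => rfl
    have hesucc : ∀ (p : ι 0 × (∀ i : Fin (m + 1), ι i.succ)) (i : Fin (m + 1)),
        e p i.succ = p.2 i := fun p i => Fin.cons_succ p.1 p.2 i
    have h1 : Erad n (fun c : (∀ i, ι i) => fun j => ⨆ i, w i (c i) j)
        = Erad n (fun p : ι 0 × (∀ i : Fin (m + 1), ι i.succ) =>
            fun j => ⨆ i, w i (e p i) j) :=
      (Erad_comp_surj _ e e.surjective).symm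
    set V : (∀ i : Fin (m + 1), ι i.succ) → Fin n → ℝ :=
      fun b j => ⨆ i : Fin (m + 1), w i.succ (b i) j with hV
    have h2 : Erad n (fun p : ι 0 × (∀ i : Fin (m + 1), ι i.succ) =>
          fun j => ⨆ i, w i (e p i) j)
        = Erad n (fun p : ι 0 × (∀ i : Fin (m + 1), ι i.succ) =>
            fun j => max (w 0 p.1 j) (V p.2 j)) := by
      refine Erad_congr fun p j => ?_
      rw [ciSup_fin_succ (fun i => w i (e p i) j)]
      have : (⨆ i : Fin (m + 1), w i.succ (e p i.succ) j) = V p.2 j := by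
        refine iSup_congr fun i => ?_
        rw [hesucc]
      rw [this]
      rfl
    -- boundedness of V
    have habs : ∀ i : Fin (m + 1), ∃ C, ∀ a : ι i.succ, ∑ j, |w i.succ a j| ≤ C :=
      fun i => exists_abs_bound (w i.succ) (hb i.succ)
    choose C hC using habs
    have hbV : ∀ ε : Fin n → Bool,
        BddAbove (range fun b : (∀ i : Fin (m + 1), ι i.succ) =>
          ∑ j, sg (ε j) * V b j) := by
      refine bdd_of_abs_le V (∑ i, C i) fun b => ?_
      calc ∑ j, |V b j| ≤ ∑ j, ∑ i : Fin (m + 1), |w i.succ (b i) j| :=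
            Finset.sum_le_sum fun j _ => abs_ciSup_le _
        _ = ∑ i : Fin (m + 1), ∑ j, |w i.succ (b i) j| := Finset.sum_comm
        _ ≤ ∑ i, C i := Finset.sum_le_sum fun i _ => hC i (b i)
    have h3 : Erad n (fun p : ι 0 × (∀ i : Fin (m + 1), ι i.succ) =>
          fun j => max (w 0 p.1 j) (V p.2 j))
        ≤ Erad n (w 0) + Erad n V :=
      two_class (w 0) V (hb 0) hbV
    have h4 : Erad n V ≤ ∑ i : Fin (m + 1), Erad n (w i.succ) :=
      ih (fun i => ι i.succ) (fun i => w i.succ) (fun i ε => hb i.succ ε)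
    rw [h1, h2, Fin.sum_univ_succ]
    linarith

end RadMax

namespace RadMax
variable {n : ℕ}

lemma iSup_div_nonneg {κ : Type*} (a : κ → ℝ) {c : ℝ} (hc : 0 ≤ c) :
    (⨆ i, a i) / c = ⨆ i, a i / c := by
  rw [div_eq_mul_inv, Real.iSup_mul_of_nonneg (inv_nonneg.2 hc)]
  exact iSup_congr fun i => (div_eq_mul_inv _ _).symm

lemma sg_eq (b : Bool) : sg b = if b then (1 : ℝ) else -1 := rfl

end RadMax


open RadMax in
/-- **Rademacher complexity of a max of classes**: if `M` is the class of
pointwise maxima `x ↦ max(f₁ x, …, f_m x)` with `f_i` ranging over class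
`F_i` (indexed by `ι i`), then `R_n(M) ≤ ∑ᵢ R_n(F_i)`, where
`R_n(F) = E_{x,ε} sup_{f∈F} (1/n) ∑ⱼ εⱼ f (xⱼ)` (the Rademacher expectation is
written as an average over sign patterns `ε : Fin n → Bool`). -/
theorem rademacher_max_le_sum
    {X : Type*} [MeasurableSpace X] (P : Measure X) [IsProbabilityMeasure P]
    (n : ℕ) (hn : 0 < n) (m : ℕ) [NeZero m]
    (ι : Fin m → Type*) [∀ i, Nonempty (ι i)]
    (g : ∀ i : Fin m, ι i → X → ℝ)
    (hbddM : ∀ (x : Fin n → X) (ε : Fin n → Bool),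
      BddAbove (Set.range fun c : (∀ i, ι i) =>
        (∑ j : Fin n, (if ε j then (1 : ℝ) else -1) * (⨆ i : Fin m, g i (c i) (x j))) / n))
    (hbddF : ∀ (i : Fin m) (x : Fin n → X) (ε : Fin n → Bool),
      BddAbove (Set.range fun a : ι i =>
        (∑ j : Fin n, (if ε j then (1 : ℝ) else -1) * g i a (x j)) / n))
    (hintM : Integrable
      (fun x : Fin n → X =>
        (∑ ε : Fin n → Bool, ⨆ c : (∀ i, ι i),
          (∑ j : Fin n, (if ε j then (1 : ℝ) else -1) *
            (⨆ i : Fin m, g i (c i) (x j))) / n) / 2 ^ n)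
      (Measure.pi fun _ : Fin n => P))
    (hintF : ∀ i : Fin m, Integrable
      (fun x : Fin n → X =>
        (∑ ε : Fin n → Bool, ⨆ a : ι i,
          (∑ j : Fin n, (if ε j then (1 : ℝ) else -1) * g i a (x j)) / n) / 2 ^ n)
      (Measure.pi fun _ : Fin n => P)) :
    ∫ x, (∑ ε : Fin n → Bool, ⨆ c : (∀ i, ι i),
        (∑ j : Fin n, (if ε j then (1 : ℝ) else -1) *
          (⨆ i : Fin m, g i (c i) (x j))) / n) / 2 ^ n
      ∂(Measure.pi fun _ : Fin n => P)
    ≤ ∑ i : Fin m, ∫ x, (∑ ε : Fin n → Bool, ⨆ a : ι i,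
        (∑ j : Fin n, (if ε j then (1 : ℝ) else -1) * g i a (x j)) / n) / 2 ^ n
      ∂(Measure.pi fun _ : Fin n => P) := by
  obtain ⟨k, rfl⟩ : ∃ k, m = k + 1 := Nat.exists_eq_succ_of_ne_zero (NeZero.ne m)
  -- pointwise inequality
  have hpt : ∀ x : Fin n → X,
      (∑ ε : Fin n → Bool, ⨆ c : (∀ i, ι i),
        (∑ j : Fin n, (if ε j then (1 : ℝ) else -1) *
          (⨆ i : Fin (k + 1), g i (c i) (x j))) / n) / 2 ^ n
      ≤ ∑ i : Fin (k + 1), (∑ ε : Fin n → Bool, ⨆ a : ι i,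
        (∑ j : Fin n, (if ε j then (1 : ℝ) else -1) * g i a (x j)) / n) / 2 ^ n := by
    intro x
    set w : ∀ i : Fin (k + 1), ι i → Fin n → ℝ :=
      fun i a j => g i a (x j) / n with hw
    have hFeq : ∀ (i : Fin (k + 1)) (ε : Fin n → Bool),
        (fun a : ι i => ∑ j, sg (ε j) * w i a j)
        = fun a : ι i => (∑ j : Fin n, (if ε j then (1 : ℝ) else -1) * g i a (x j)) / n := by
      intro i ε
      funext a
      rw [Finset.sum_div]
      exact Finset.sum_congr rfl fun j _ => by rw [mul_div_assoc, sg_eq]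
    have hb : ∀ (i : Fin (k + 1)) (ε : Fin n → Bool),
        BddAbove (Set.range fun a : ι i => ∑ j, sg (ε j) * w i a j) := by
      intro i ε
      rw [hFeq i ε]
      exact hbddF i x ε
    have key := main_pointwise (n := n) k ι w hb
    have hMeq : ∀ ε : Fin n → Bool,
        (fun c : (∀ i, ι i) =>
          (∑ j : Fin n, (if ε j then (1 : ℝ) else -1) * (⨆ i : Fin (k + 1), g i (c i) (x j))) / n)
        = fun c : (∀ i, ι i) => ∑ j, sg (ε j) * ⨆ i : Fin (k + 1), w i (c i) j := by
      intro ε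
      funext c
      rw [Finset.sum_div]
      refine Finset.sum_congr rfl fun j _ => ?_
      rw [mul_div_assoc, sg_eq]
      congr 1
      exact iSup_div_nonneg (fun i => g i (c i) (x j)) (Nat.cast_nonneg n)
    have hLHS : (∑ ε : Fin n → Bool, ⨆ c : (∀ i, ι i),
        (∑ j : Fin n, (if ε j then (1 : ℝ) else -1) *
          (⨆ i : Fin (k + 1), g i (c i) (x j))) / n)
        = Erad n (fun c : (∀ i, ι i) => fun j => ⨆ i : Fin (k + 1), w i (c i) j) := by
      refine Finset.sum_congr rfl fun ε _ => ?_
      rw [show (fun c : (∀ i, ι i) =>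
          (∑ j : Fin n, (if ε j then (1 : ℝ) else -1) *
            (⨆ i : Fin (k + 1), g i (c i) (x j))) / n)
          = fun c : (∀ i, ι i) => ∑ j, sg (ε j) * ⨆ i : Fin (k + 1), w i (c i) j
        from hMeq ε]
    have hRHS : ∀ i : Fin (k + 1),
        (∑ ε : Fin n → Bool, ⨆ a : ι i,
          (∑ j : Fin n, (if ε j then (1 : ℝ) else -1) * g i a (x j)) / n)
        = Erad n (w i) := by
      intro i
      refine Finset.sum_congr rfl fun ε _ => ?_
      rw [show (fun a : ι i =>
          (∑ j : Fin n, (if ε j then (1 : ℝ) else -1) * g i a (x j)) / n)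
          = fun a : ι i => ∑ j, sg (ε j) * w i a j from (hFeq i ε).symm]
    rw [hLHS]
    calc Erad n (fun c : (∀ i, ι i) => fun j => ⨆ i : Fin (k + 1), w i (c i) j) / 2 ^ n
        ≤ (∑ i : Fin (k + 1), Erad n (w i)) / 2 ^ n := by
          have h2 : (0:ℝ) < 2 ^ n := by positivity
          exact (div_le_div_iff_of_pos_right h2).mpr key
      _ = ∑ i : Fin (k + 1), Erad n (w i) / 2 ^ n := Finset.sum_div _ _ _
      _ = _ := Finset.sum_congr rfl fun i _ => by rw [hRHS i]
  calc ∫ x, (∑ ε : Fin n → Bool, ⨆ c : (∀ i, ι i),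
        (∑ j : Fin n, (if ε j then (1 : ℝ) else -1) *
          (⨆ i : Fin (k + 1), g i (c i) (x j))) / n) / 2 ^ n
      ∂(Measure.pi fun _ : Fin n => P)
      ≤ ∫ x, ∑ i : Fin (k + 1), (∑ ε : Fin n → Bool, ⨆ a : ι i,
          (∑ j : Fin n, (if ε j then (1 : ℝ) else -1) * g i a (x j)) / n) / 2 ^ n
        ∂(Measure.pi fun _ : Fin n => P) := by
        refine integral_mono hintM ?_ hpt
        exact integrable_finset_sum _ fun i _ => hintF i
    _ = _ := integral_finset_sum _ fun i _ => hintF i
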